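/- Let V be a nonempty finite type, let ℓu Δℓ : V → ℝ, and for w : ℝ define the guided policy π_w(a) = exp(ℓu a + w * Δℓ a) / Z(w) where Z(w) = ∑_{k ∈ V} exp(ℓu k + w * Δℓ k). Fix y⋆ : V and let L(w) = -log (π_w y⋆). Then for every w, the derivative of L at w is strictly negative if and only if Δℓ y⋆ > ∑_{a ∈ V} π_w(a) * Δℓ a (the Advantage Margin Condition). -/

import Mathlib

open Real Finset

noncomputable def Zfun {V : Type*} [Fintype V] (ℓu Δℓ : V → ℝ) (w : ℝ) : ℝ :=
  ∑ k, Real.exp (ℓu k + w * Δℓ k)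

noncomputable def pol {V : Type*} [Fintype V] (ℓu Δℓ : V → ℝ) (w : ℝ) (a : V) : ℝ :=
  Real.exp (ℓu a + w * Δℓ a) / Zfun ℓu Δℓ w

noncomputable def lossCE {V : Type*} [Fintype V] (ℓu Δℓ : V → ℝ) (ystar : V) (w : ℝ) : ℝ :=
  -Real.log (pol ℓu Δℓ w ystar)

lemma Zfun_pos {V : Type*} [Fintype V] [Nonempty V] (ℓu Δℓ : V → ℝ) (w : ℝ) :
    0 < Zfun ℓu Δℓ w :=
  Finset.sum_pos (fun k _ => Real.exp_pos _) Finset.univ_nonempty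

lemma hasDerivAt_Zfun {V : Type*} [Fintype V] (ℓu Δℓ : V → ℝ) (w : ℝ) :
    HasDerivAt (Zfun ℓu Δℓ) (∑ k, Real.exp (ℓu k + w * Δℓ k) * Δℓ k) w := by
  have : ∀ k : V, HasDerivAt (fun w => Real.exp (ℓu k + w * Δℓ k))
      (Real.exp (ℓu k + w * Δℓ k) * Δℓ k) w := by
    intro k
    have h : HasDerivAt (fun w : ℝ => ℓu k + w * Δℓ k) (Δℓ k) w :=
      (hasDerivAt_mul_const (Δℓ k)).const_add (ℓu k)
    exact h.exp
  exact HasDerivAt.fun_sum (fun k _ => this k)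

lemma lossCE_eq {V : Type*} [Fintype V] [Nonempty V] (ℓu Δℓ : V → ℝ) (ystar : V) (w : ℝ) :
    lossCE ℓu Δℓ ystar w = Real.log (Zfun ℓu Δℓ w) - (ℓu ystar + w * Δℓ ystar) := by
  unfold lossCE pol
  rw [Real.log_div (Real.exp_pos _).ne' (Zfun_pos ℓu Δℓ w).ne', Real.log_exp]
  ring

lemma deriv_lossCE {V : Type*} [Fintype V] [Nonempty V] (ℓu Δℓ : V → ℝ) (ystar : V) (w : ℝ) :
    deriv (lossCE ℓu Δℓ ystar) w = (∑ a, pol ℓu Δℓ w a * Δℓ a) - Δℓ ystar := by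
  have hZ := hasDerivAt_Zfun ℓu Δℓ w
  have hlin : HasDerivAt (fun w : ℝ => ℓu ystar + w * Δℓ ystar) (Δℓ ystar) w :=
    (hasDerivAt_mul_const (Δℓ ystar)).const_add (ℓu ystar)
  have hL : HasDerivAt (lossCE ℓu Δℓ ystar)
      ((∑ k, Real.exp (ℓu k + w * Δℓ k) * Δℓ k) / Zfun ℓu Δℓ w - Δℓ ystar) w := by
    have := (hZ.log (Zfun_pos ℓu Δℓ w).ne').sub hlin
    refine this.congr_of_eventuallyEq ?_
    filter_upwards with x using (lossCE_eq ℓu Δℓ ystar x)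
  rw [hL.deriv]
  congr 1
  rw [Finset.sum_div]
  refine Finset.sum_congr rfl fun a _ => ?_
  unfold pol
  ring

theorem advantage_margin_condition {V : Type*} [Fintype V] [Nonempty V]
    (ℓu Δℓ : V → ℝ) (ystar : V) :
    ∀ w : ℝ,
      deriv (lossCE ℓu Δℓ ystar) w < 0 ↔
        Δℓ ystar > ∑ a, pol ℓu Δℓ w a * Δℓ a := by
  intro w
  rw [deriv_lossCE]
  constructor <;> intro h <;> linarith
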